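/- arXiv:1503.05765 — 2 statements merged into one kernel-verified Lean document; each statement's English description precedes it below -/
import Mathlib

section
/- The boxicity of a graph G equals the maximum of the boxicities of its connected components. -/
open SimpleGraph

/-- A graph is an interval graph if it is the intersection graph of closed
intervals of the real line. -/
def IsIntervalGraph {V : Type*} (G : SimpleGraph V) : Prop :=
  ∃ I : V → Set ℝ, (∀ v, ∃ a b : ℝ, I v = Set.Icc a b) ∧
    ∀ u v : V, u ≠ v → (G.Adj u v ↔ (I u ∩ I v).Nonempty)

/-- `G` is the intersection of `k` interval graphs on the same vertex set. -/
def HasBoxicityLE {V : Type*} (G : SimpleGraph V) (k : ℕ) : Prop :=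
  ∃ f : Fin k → SimpleGraph V, (∀ i, IsIntervalGraph (f i)) ∧
    ∀ u v : V, G.Adj u v ↔ ∀ i, (f i).Adj u v

/-- The boxicity of `G`: the least `k` such that `G` is the intersection of
`k` interval graphs on its vertex set. -/
noncomputable def boxicity {V : Type*} (G : SimpleGraph V) : ℕ :=
  sInf {k | HasBoxicityLE G k}

section Aux

open Set

/-- The intersection graph of a family of sets of reals. -/
def ofIntervals {V : Type*} (I : V → Set ℝ) : SimpleGraph V where
  Adj u v := u ≠ v ∧ (I u ∩ I v).Nonempty
  symm := ⟨fun u v => by rintro ⟨h, x, hx1, hx2⟩; exact ⟨h.symm, x, hx2, hx1⟩⟩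
  loopless := ⟨fun v => by rintro ⟨h, -⟩; exact h rfl⟩

lemma ofIntervals_adj {V : Type*} (I : V → Set ℝ) (u v : V) :
    (ofIntervals I).Adj u v ↔ u ≠ v ∧ (I u ∩ I v).Nonempty := Iff.rfl

lemma isIntervalGraph_ofIntervals {V : Type*} {I : V → Set ℝ}
    (h : ∀ v, ∃ a b : ℝ, I v = Set.Icc a b) : IsIntervalGraph (ofIntervals I) :=
  ⟨I, h, fun _ _ huv => ⟨fun h2 => h2.2, fun h2 => ⟨huv, h2⟩⟩⟩

lemma hasBoxicityLE_induce {V : Type*} {G : SimpleGraph V} {k : ℕ} (s : Set V)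
    (h : HasBoxicityLE G k) : HasBoxicityLE (G.induce s) k := by
  obtain ⟨f, hf, hG⟩ := h
  choose I hIcc hadj using hf
  refine ⟨fun i => ofIntervals (fun v : s => I i v),
    fun i => isIntervalGraph_ofIntervals (fun v => hIcc i v), ?_⟩
  rintro u v
  by_cases huv : u = v
  · subst huv
    simp only [SimpleGraph.irrefl, false_iff]
    intro hall
    rcases Nat.eq_zero_or_pos k with rfl | hk
    · exact G.irrefl ((hG u u).2 (fun i => i.elim0))
    · exact hall ⟨0, hk⟩
  · have hcv : (u : V) ≠ v := fun h => huv (Subtype.coe_injective h)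
    rw [SimpleGraph.comap_adj, hG]
    constructor
    · intro hall i
      exact ⟨huv, ((hadj i) u v hcv).1 (hall i)⟩
    · intro hall i
      exact ((hadj i) u v hcv).2 (hall i).2

lemma exists_hasBoxicityLE {V : Type*} [Finite V] (G : SimpleGraph V) :
    ∃ k, HasBoxicityLE G k := by
  classical
  cases nonempty_fintype V
  set k := Fintype.card (V × V) with hk
  set e : Fin k ≃ V × V := (Fintype.equivFin (V × V)).symm with he
  set J : V × V → V → Set ℝ := fun p v =>
    if v = p.1 then Icc (0:ℝ) 0
    else if v = p.2 ∧ ¬ G.Adj p.1 p.2 then Icc (1:ℝ) 1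
    else Icc (0:ℝ) 1 with hJ
  have hJicc : ∀ p v, ∃ a b : ℝ, J p v = Icc a b := by
    intro p v
    simp only [hJ]
    split_ifs <;> exact ⟨_, _, rfl⟩
  refine ⟨k, fun i => ofIntervals (J (e i)), fun i => isIntervalGraph_ofIntervals (hJicc _), ?_⟩
  intro u v
  constructor
  · intro hadj i
    have hne : u ≠ v := G.ne_of_adj hadj
    refine ⟨hne, ?_⟩
    obtain ⟨a, b⟩ := e i
    simp only [hJ]
    by_cases hua : u = a
    · rw [if_pos hua]
      have hva : ¬ v = a := fun h => hne (hua.trans h.symm)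
      rw [if_neg hva]
      have hvb : ¬ (v = b ∧ ¬ G.Adj a b) := by
        rintro ⟨rfl, hn⟩; exact hn (hua ▸ hadj)
      rw [if_neg hvb]
      exact ⟨0, by norm_num [Set.mem_inter_iff, Set.mem_Icc]⟩
    · rw [if_neg hua]
      by_cases hub : u = b ∧ ¬ G.Adj a b
      · rw [if_pos hub]
        have hva : ¬ v = a := by
          rintro rfl; exact hub.2 (hub.1 ▸ hadj).symm
        have hvb : ¬ (v = b ∧ ¬ G.Adj a b) := by
          rintro ⟨rfl, -⟩; exact hne (hub.1)
        rw [if_neg hva, if_neg hvb]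
        exact ⟨1, by norm_num [Set.mem_inter_iff, Set.mem_Icc]⟩
      · rw [if_neg hub]
        by_cases hva : v = a
        · rw [if_pos hva]
          exact ⟨0, by norm_num [Set.mem_inter_iff, Set.mem_Icc]⟩
        · rw [if_neg hva]
          by_cases hvb : v = b ∧ ¬ G.Adj a b
          · rw [if_pos hvb]
            exact ⟨1, by norm_num [Set.mem_inter_iff, Set.mem_Icc]⟩
          · rw [if_neg hvb]
            exact ⟨0, by norm_num [Set.mem_inter_iff, Set.mem_Icc]⟩
  · intro hall
    by_cases hne : u = v
    · subst hne
      have := hall (e.symm (u, u))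
      exact absurd rfl this.1
    · by_contra hadj
      have := (hall (e.symm (u, v))).2
      rw [Equiv.apply_symm_apply] at this
      obtain ⟨x, hx1, hx2⟩ := this
      simp only [hJ, if_true, true_and] at hx1 hx2
      rw [if_neg (show ¬ v = u from fun h => hne h.symm), if_pos hadj] at hx2
      simp at hx1 hx2
      linarith [hx1, hx2]

noncomputable def sig (x : ℝ) : ℝ := ((orderIsoIooNegOneOne ℝ) x : ℝ)

lemma sig_mem (x : ℝ) : sig x ∈ Ioo (-1:ℝ) 1 := ((orderIsoIooNegOneOne ℝ) x).2

lemma sig_le_iff {x y : ℝ} : sig x ≤ sig y ↔ x ≤ y := by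
  rw [sig, sig, Subtype.coe_le_coe]
  exact (orderIsoIooNegOneOne ℝ).le_iff_le

lemma sig_mono : Monotone sig := fun _ _ h => sig_le_iff.2 h

lemma shift_inter (w a b a' b' : ℝ) :
    (Icc (w + sig a) (w + sig b) ∩ Icc (w + sig a') (w + sig b')).Nonempty ↔
      (Icc a b ∩ Icc a' b').Nonempty := by
  rw [Set.Icc_inter_Icc, Set.nonempty_Icc, Set.Icc_inter_Icc, Set.nonempty_Icc,
    max_add_add_left, min_add_add_left,
    ← sig_mono.map_max, ← sig_mono.map_min, add_le_add_iff_left, sig_le_iff]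

end Aux

open Set

/-- The boxicity of a graph is the maximum of the boxicities of its connected
components. -/
theorem boxicity_eq_iSup_components {V : Type*} [Fintype V] (G : SimpleGraph V) :
    boxicity G = ⨆ c : G.ConnectedComponent, boxicity (G.induce c.supp) := by
  classical
  have hSG : {k | HasBoxicityLE G k}.Nonempty := exists_hasBoxicityLE G
  have hGmem : HasBoxicityLE G (boxicity G) := Nat.sInf_mem hSG
  have hle1 : ∀ c : G.ConnectedComponent, boxicity (G.induce c.supp) ≤ boxicity G :=
    fun c => Nat.sInf_le (hasBoxicityLE_induce _ hGmem)
  have hcompmem : ∀ c : G.ConnectedComponent,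
      HasBoxicityLE (G.induce c.supp) (boxicity (G.induce c.supp)) :=
    fun c => Nat.sInf_mem (exists_hasBoxicityLE _)
  have hpos : ∀ c : G.ConnectedComponent, 1 ≤ boxicity (G.induce c.supp) := by
    intro c
    obtain ⟨v, hv⟩ : ∃ v, G.connectedComponentMk v = c := Quot.exists_rep c
    rcases Nat.eq_zero_or_pos (boxicity (G.induce c.supp)) with h0 | h
    · exfalso
      obtain ⟨f, -, hadj⟩ := hcompmem c
      have := (hadj ⟨v, hv⟩ ⟨v, hv⟩).2 (fun i => by rw [h0] at i; exact i.elim0)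
      exact (G.induce c.supp).irrefl this
    · exact h
  set m := ⨆ c : G.ConnectedComponent, boxicity (G.induce c.supp) with hm
  have hbdd : BddAbove (Set.range fun c : G.ConnectedComponent =>
      boxicity (G.induce c.supp)) := Set.Finite.bddAbove (Set.finite_range _)
  have hlem : ∀ c : G.ConnectedComponent, boxicity (G.induce c.supp) ≤ m :=
    fun c => le_ciSup hbdd c
  refine le_antisymm ?_ ?_
  · -- boxicity G ≤ m
    choose F hFint hFadj using hcompmem
    choose I hI1 hI2 using fun c i => hFint c i
    choose A B hAB using fun c i v => hI1 c i v
    -- window positions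
    set n : G.ConnectedComponent → ℕ := fun c => ((Fintype.equivFin V) c.out : ℕ) with hn
    have hninj : Function.Injective n := by
      intro c c' h
      have h2 : (Fintype.equivFin V) c.out = (Fintype.equivFin V) c'.out := Fin.val_injective h
      have h3 : c.out = c'.out := (Fintype.equivFin V).injective h2
      rw [← Quot.out_eq c, ← Quot.out_eq c', h3]
    set w : G.ConnectedComponent → ℝ := fun c => 3 * (n c : ℝ) with hw
    -- padded index
    have hidx : ∀ (c : G.ConnectedComponent) (i : Fin m),
        min (i : ℕ) (boxicity (G.induce c.supp) - 1) < boxicity (G.induce c.supp) := by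
      intro c i
      have := hpos c
      omega
    set idx : ∀ c : G.ConnectedComponent, Fin m → Fin (boxicity (G.induce c.supp)) :=
      fun c i => ⟨min (i : ℕ) (boxicity (G.induce c.supp) - 1), hidx c i⟩ with hidxdef
    set J : Fin m → V → Set ℝ := fun i v =>
      Icc (w (G.connectedComponentMk v) +
            sig (A (G.connectedComponentMk v) (idx _ i) ⟨v, rfl⟩))
          (w (G.connectedComponentMk v) +
            sig (B (G.connectedComponentMk v) (idx _ i) ⟨v, rfl⟩)) with hJdef
    have hJ : ∀ (i : Fin m) (v : V) (c : G.ConnectedComponent)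
        (h : G.connectedComponentMk v = c),
        J i v = Icc (w c + sig (A c (idx c i) ⟨v, h⟩)) (w c + sig (B c (idx c i) ⟨v, h⟩)) := by
      rintro i v c rfl; rfl
    have hJsub : ∀ (i : Fin m) (v : V),
        J i v ⊆ Ioo (w (G.connectedComponentMk v) - 1) (w (G.connectedComponentMk v) + 1) := by
      intro i v x hx
      rw [hJ i v _ rfl] at hx
      obtain ⟨hx1, hx2⟩ := hx
      have h1 := (sig_mem (A (G.connectedComponentMk v) (idx _ i) ⟨v, rfl⟩)).1
      have h2 := (sig_mem (B (G.connectedComponentMk v) (idx _ i) ⟨v, rfl⟩)).2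
      exact ⟨by linarith, by linarith⟩
    refine Nat.sInf_le ⟨fun i => ofIntervals (J i),
      fun i => isIntervalGraph_ofIntervals (fun v => ⟨_, _, hJ i v _ rfl⟩), ?_⟩
    intro u v
    have hm1 : 1 ≤ m := le_trans (hpos (G.connectedComponentMk u))
      (hlem (G.connectedComponentMk u))
    by_cases huv : u = v
    · subst huv
      constructor
      · intro h; exact absurd h (G.irrefl)
      · intro hall; exact absurd rfl (hall ⟨0, hm1⟩).1
    · by_cases hcc : G.connectedComponentMk u = G.connectedComponentMk v
      · -- same component
        set c := G.connectedComponentMk u with hc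
        have hvmem : G.connectedComponentMk v = c := hcc.symm
        set U : c.supp := ⟨u, rfl⟩ with hU
        set W : c.supp := ⟨v, hvmem⟩ with hW
        have hUW : U ≠ W := fun h => huv (congrArg Subtype.val h)
        have key : ∀ i : Fin m,
            ((ofIntervals (J i)).Adj u v ↔ (F c (idx c i)).Adj U W) := by
          intro i
          rw [ofIntervals_adj, hJ i u c rfl, hJ i v c hvmem,
            hI2 c (idx c i) U W hUW, hAB, hAB, shift_inter (w c)]
          exact and_iff_right huv
        have hsurj : (∀ j, (F c j).Adj U W) ↔ (∀ i : Fin m, (F c (idx c i)).Adj U W) := by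
          constructor
          · intro h i; exact h _
          · intro h j
            have hjm : (j : ℕ) < m := lt_of_lt_of_le j.2 (hlem c)
            have : idx c ⟨j, hjm⟩ = j := by
              apply Fin.ext
              simp only [hidxdef]
              have := j.2
              omega
            rw [← this]
            exact h ⟨j, hjm⟩
        have hGA : G.Adj u v ↔ ∀ j, (F c j).Adj U W := hFadj c U W
        rw [hGA, hsurj]
        exact ⟨fun h i => (key i).2 (h i), fun h i => (key i).1 (h i)⟩
      · -- different components
        constructor
        · intro hadj
          exact absurd (ConnectedComponent.sound hadj.reachable) hcc
        · intro hall
          exfalso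
          obtain ⟨-, x, hx1, hx2⟩ := hall ⟨0, hm1⟩
          have h1 := hJsub _ u hx1
          have h2 := hJsub _ v hx2
          have hne : n (G.connectedComponentMk u) ≠ n (G.connectedComponentMk v) :=
            fun h => hcc (hninj h)
          simp only [hw] at h1 h2
          obtain ⟨h1a, h1b⟩ := h1
          obtain ⟨h2a, h2b⟩ := h2
          rcases lt_or_gt_of_ne hne with h | h
          · have : ((n (G.connectedComponentMk u) : ℝ) + 1 : ℝ) ≤
                (n (G.connectedComponentMk v) : ℝ) := by exact_mod_cast h
            linarith
          · have : ((n (G.connectedComponentMk v) : ℝ) + 1 : ℝ) ≤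
                (n (G.connectedComponentMk u) : ℝ) := by exact_mod_cast h
            linarith
  · -- m ≤ boxicity G
    cases isEmpty_or_nonempty G.ConnectedComponent with
    | inl h =>
      have hm0 : m = 0 := by rw [hm, ciSup_of_empty]; rfl
      rw [hm0]; exact Nat.zero_le _
    | inr h => exact ciSup_le hle1
end

section
/- Assume the following two facts: (1) every k-degenerate graph on n ≥ 2 vertices has boxicity at most (k+2)·⌈2e·log n⌉; (2) for any graph G and vertex subset S, if H is obtained from G by deleting all edges inside S, then box(G) ≤ 2·box(H) + box(G[S]); and (3) every graph on N vertices has boxicity at most N/2. Then every connected graph G on n ≥ 2 vertices with m edges satisfies box(G) ≤ (15e+1)·√(m·log n). -/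
open SimpleGraph

set_option maxHeartbeats 1000000 in
/-- Assuming the degeneracy bound on boxicity, the edge-deletion lemma, and the
`N/2` bound, every connected graph on `n ≥ 2` vertices with `m` edges has
boxicity at most `(15e+1)·√(m·log n)`. -/
theorem boxicity_le_sqrt_edges
    (fact1 : ∀ (W : Type) (_ : Fintype W) (H : SimpleGraph W) (k : ℕ),
      2 ≤ Fintype.card W →
      (∀ s : Finset W, s.Nonempty →
        ∃ v ∈ s, Nat.card {u : W // u ∈ s ∧ H.Adj v u} ≤ k) →
      (boxicity H : ℝ) ≤
        ((k : ℝ) + 2) * ((⌈2 * Real.exp 1 * Real.log (Fintype.card W)⌉ : ℤ) : ℝ))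
    (fact2 : ∀ (W : Type) (_ : Fintype W) (G H : SimpleGraph W) (S : Set W),
      (∀ u v : W, H.Adj u v ↔ G.Adj u v ∧ (u ∉ S ∨ v ∉ S)) →
      boxicity G ≤ 2 * boxicity H + boxicity (G.induce S))
    (fact3 : ∀ (W : Type) (_ : Fintype W) (G : SimpleGraph W),
      (boxicity G : ℝ) ≤ (Fintype.card W : ℝ) / 2)
    {V : Type} [Fintype V] (G : SimpleGraph V) (hconn : G.Connected)
    (hn : 2 ≤ Fintype.card V) :
    (boxicity G : ℝ) ≤ (15 * Real.exp 1 + 1) *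
      Real.sqrt ((Nat.card G.edgeSet : ℝ) * Real.log (Fintype.card V)) := by
  classical
  set e : ℝ := Real.exp 1 with he_def
  set L : ℝ := Real.log (Fintype.card V) with hL_def
  set rm : ℝ := (Nat.card G.edgeSet : ℝ) with hrm_def
  -- every vertex has a neighbor
  have hdeg1 : ∀ v : V, 1 ≤ G.degree v := by
    intro v
    have h1 : 0 < G.degree v := by
      rw [G.degree_pos_iff_exists_adj]
      obtain ⟨w, hw⟩ := Fintype.exists_ne_of_one_lt_card hn v
      obtain ⟨p⟩ := hconn.preconnected v w
      exact ⟨_, (p.firstDart (SimpleGraph.Walk.not_nil_of_ne (Ne.symm hw))).adj⟩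
    omega
  -- degree sum formula with Nat.card
  have hsum : ∑ v, G.degree v = 2 * Nat.card G.edgeSet := by
    have h := G.sum_degrees_eq_twice_card_edges
    rwa [SimpleGraph.edgeFinset_card, ← Nat.card_eq_fintype_card] at h
  -- n ≤ 2m
  have hn_le : Fintype.card V ≤ 2 * Nat.card G.edgeSet := by
    rw [← hsum]
    calc Fintype.card V = ∑ _v : V, 1 := by simp
      _ ≤ ∑ v, G.degree v := Finset.sum_le_sum fun v _ => hdeg1 v
  have hn2 : (2:ℝ) ≤ (Fintype.card V : ℝ) := by exact_mod_cast hn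
  have hn_le' : (Fintype.card V : ℝ) ≤ 2 * rm := by
    rw [hrm_def]; exact_mod_cast hn_le
  have hm1 : (1:ℝ) ≤ rm := by linarith
  have hLpos : 0 < L := by
    rw [hL_def]; exact Real.log_pos (by exact_mod_cast hn)
  have hLlog2 : Real.log 2 ≤ L := by
    rw [hL_def]; exact Real.log_le_log (by norm_num) hn2
  have hL2 : (0.6931471803 : ℝ) ≤ L := le_trans Real.log_two_gt_d9.le hLlog2
  have he27 : (2.7182818283 : ℝ) ≤ e := Real.exp_one_gt_d9.le
  -- L ≤ m via log n ≤ n/2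
  have hLm : L ≤ rm := by
    set t : ℝ := Real.sqrt (Fintype.card V : ℝ) with ht_def
    have ht0 : 0 < t := Real.sqrt_pos.mpr (by linarith)
    have hts : t * t = (Fintype.card V : ℝ) := Real.mul_self_sqrt (by linarith)
    have hlt : Real.log t ≤ t - 1 := Real.log_le_sub_one_of_pos ht0
    have hLt : L = 2 * Real.log t := by
      rw [hL_def, ht_def, Real.log_sqrt (by linarith)]; ring
    nlinarith [sq_nonneg (t - 2)]
  set d : ℝ := Real.sqrt (rm / L) with hd_def
  have hd0 : 0 ≤ d := Real.sqrt_nonneg _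
  have hdpos : 0 < d := Real.sqrt_pos.mpr (by positivity)
  set k : ℕ := ⌊d⌋₊ with hk_def
  have hkd : (k:ℝ) ≤ d := Nat.floor_le hd0
  have hdk1 : d < (k:ℝ) + 1 := Nat.lt_floor_add_one d
  set S : Set V := {v | k + 1 ≤ G.degree v} with hS_def
  haveI : Fintype ↥S := Fintype.ofFinite _
  obtain ⟨H, hHadj⟩ : ∃ H : SimpleGraph V,
      ∀ u w : V, H.Adj u w ↔ G.Adj u w ∧ (u ∉ S ∨ w ∉ S) :=
    ⟨{ Adj := fun u w => G.Adj u w ∧ (u ∉ S ∨ w ∉ S)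
       symm := ⟨fun u w h => ⟨h.1.symm, h.2.symm⟩⟩
       loopless := ⟨fun u h => G.loopless.irrefl u h.1⟩ }, fun _ _ => Iff.rfl⟩
  have h2 : boxicity G ≤ 2 * boxicity H + boxicity (G.induce S) :=
    fact2 V inferInstance G H S hHadj
  -- degeneracy of H
  have hdegen : ∀ s : Finset V, s.Nonempty →
      ∃ v ∈ s, Nat.card {u : V // u ∈ s ∧ H.Adj v u} ≤ k := by
    intro s hs
    by_cases hc : ∃ v ∈ s, v ∉ S
    · obtain ⟨v, hv, hvS⟩ := hc
      refine ⟨v, hv, ?_⟩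
      have hinj : Function.Injective
          (fun x : {u : V // u ∈ s ∧ H.Adj v u} =>
            (⟨x.1, ((hHadj v x.1).mp x.2.2).1⟩ : ↥(G.neighborSet v))) := by
        intro a b hab
        have h1 := congrArg Subtype.val hab
        exact Subtype.ext h1
      have hle := Nat.card_le_card_of_injective _ hinj
      have hns : Nat.card ↥(G.neighborSet v) = G.degree v := by
        rw [← SimpleGraph.card_neighborSet_eq_degree, Nat.card_eq_fintype_card]
      have hvk : G.degree v ≤ k := by
        simp only [hS_def, Set.mem_setOf_eq, not_le] at hvS
        omega
      exact le_trans hle (hns.le.trans hvk)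
    · push_neg at hc
      obtain ⟨v, hv⟩ := hs
      refine ⟨v, hv, ?_⟩
      haveI : IsEmpty {u : V // u ∈ s ∧ H.Adj v u} := by
        refine ⟨fun x => ?_⟩
        obtain ⟨u, hu, hadj⟩ := x
        rcases ((hHadj v u).mp hadj).2 with h | h
        · exact h (hc v hv)
        · exact h (hc u hu)
      simp [Nat.card_of_isEmpty]
  have h1 := fact1 V inferInstance H k hn hdegen
  rw [← hL_def] at h1
  have h3 := fact3 ↥S inferInstance (G.induce S)
  -- |S| * (k+1) ≤ 2m
  have hScard : Fintype.card ↥S * (k+1) ≤ 2 * Nat.card G.edgeSet := by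
    rw [← hsum]
    calc Fintype.card ↥S * (k+1) = ∑ _v ∈ S.toFinset, (k+1) := by
          rw [Finset.sum_const, smul_eq_mul, Set.toFinset_card]
      _ ≤ ∑ v ∈ S.toFinset, G.degree v := by
          refine Finset.sum_le_sum fun v hv => ?_
          have hv' := Set.mem_toFinset.mp hv
          simpa [hS_def] using hv'
      _ ≤ ∑ v, G.degree v := by
          refine Finset.sum_le_sum_of_subset_of_nonneg (Finset.subset_univ _) ?_
          intros; exact Nat.zero_le _
  -- real versions
  set s' : ℝ := Real.sqrt (rm * L) with hs'_def
  have hs'0 : 0 ≤ s' := Real.sqrt_nonneg _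
  have hs'sq : s' ^ 2 = rm * L := Real.sq_sqrt (by positivity)
  have hds : d * s' = rm := by
    have key : rm / L * (rm * L) = rm * rm := by field_simp
    rw [hd_def, hs'_def, ← Real.sqrt_mul (by positivity), key]
    exact Real.sqrt_mul_self (by linarith)
  have hdL : d * L = s' := by
    have key : rm * L = rm / L * L ^ 2 := by field_simp
    rw [hd_def, hs'_def, key, Real.sqrt_mul (by positivity), Real.sqrt_sq hLpos.le]
  have hsL : L ≤ s' := by nlinarith
  have hS2 : (Fintype.card ↥S : ℝ) ≤ 2 * s' := by
    have hcast : (Fintype.card ↥S : ℝ) * ((k:ℝ) + 1) ≤ 2 * rm := by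
      rw [hrm_def]; exact_mod_cast hScard
    have hc0 : (0:ℝ) ≤ (Fintype.card ↥S : ℝ) := Nat.cast_nonneg _
    have hSd : (Fintype.card ↥S : ℝ) * d ≤ (2 * s') * d := by
      have h4 : (Fintype.card ↥S : ℝ) * d ≤ (Fintype.card ↥S : ℝ) * ((k:ℝ) + 1) :=
        mul_le_mul_of_nonneg_left hdk1.le hc0
      calc (Fintype.card ↥S : ℝ) * d ≤ 2 * rm := le_trans h4 hcast
        _ = (2 * s') * d := by rw [← hds]; ring
    exact le_of_mul_le_mul_right hSd hdpos
  have hC : ((⌈2 * e * L⌉ : ℤ) : ℝ) ≤ 2 * e * L + 1 := (Int.ceil_lt_add_one _).le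
  have hC0 : (0:ℝ) ≤ ((⌈2 * e * L⌉ : ℤ) : ℝ) :=
    le_trans (by positivity) (Int.le_ceil _)
  have h2' : (boxicity G : ℝ) ≤ 2 * (boxicity H : ℝ) + (boxicity (G.induce S) : ℝ) := by
    exact_mod_cast h2
  have hb1 : 2 * d ≤ 3 * s' := by
    nlinarith [mul_nonneg hd0 (by linarith : (0:ℝ) ≤ L - 0.6931471803)]
  have hb2 : 8 * e * L ≤ 8 * e * s' :=
    mul_le_mul_of_nonneg_left hsL (by linarith : (0:ℝ) ≤ 8 * e)
  have hb3 : (4:ℝ) ≤ 5 * s' := by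
    have hq : (0.6931471803 : ℝ) ≤ s' ^ 2 := by nlinarith
    nlinarith
  have hBH : (boxicity H : ℝ) ≤ (d + 2) * (2 * e * L + 1) := by
    calc (boxicity H : ℝ) ≤ ((k:ℝ) + 2) * ((⌈2 * e * L⌉ : ℤ) : ℝ) := h1
      _ ≤ (d + 2) * (2 * e * L + 1) := by
          have h0 : (0:ℝ) ≤ (k:ℝ) + 2 := by positivity
          nlinarith
  have hBI : (boxicity (G.induce S) : ℝ) ≤ s' := by
    calc (boxicity (G.induce S) : ℝ) ≤ (Fintype.card ↥S : ℝ) / 2 := h3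
      _ ≤ s' := by linarith
  have hes' : e * (d * L) = e * s' := by rw [hdL]
  calc (boxicity G : ℝ) ≤ 2 * (boxicity H : ℝ) + (boxicity (G.induce S) : ℝ) := h2'
    _ ≤ 2 * ((d + 2) * (2 * e * L + 1)) + s' := by linarith
    _ ≤ (15 * e + 1) * s' := by
        nlinarith [hes', hb1, hb2, hb3,
          mul_nonneg hs'0 (by linarith : (0:ℝ) ≤ e - 2.7)]
end
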